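/- Let (Ω, P) be a probability space, U : Ω → Ω a measure-preserving transformation, and (W_n) a sequence of non-negative real-valued random variables on Ω satisfying the subadditivity W_{n+m} ≤ W_n + W_m ∘ U^n for all m, n ∈ ℕ, with W_1 integrable. Then there exists a U-invariant random variable W_∞ such that (1/n) W_n → W_∞ almost surely. If moreover U is ergodic, then W_∞ is almost everywhere constant. -/

import Mathlib

open MeasureTheory Filter Topology Finset
open scoped ENNReal NNReal

namespace KingmanAux

set_option linter.unusedSectionVars false
set_option linter.unusedVariables false

variable {Ω : Type*} [MeasurableSpace Ω]

/-- Birkhoff sums. -/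
noncomputable def birk (U : Ω → Ω) (f : Ω → ℝ) (n : ℕ) (ω : Ω) : ℝ :=
  ∑ k ∈ Finset.range n, f (U^[k] ω)

lemma birk_succ_left (U : Ω → Ω) (f : Ω → ℝ) (n : ℕ) (ω : Ω) :
    birk U f (n + 1) ω = f ω + birk U f n (U ω) := by
  simp only [birk, Finset.sum_range_succ']
  simp [Function.iterate_succ_apply, add_comm]

lemma birk_measurable {U : Ω → Ω} {f : Ω → ℝ} (hU : Measurable U) (hf : Measurable f) (n : ℕ) :
    Measurable (birk U f n) :=
  Finset.measurable_sum _ fun k _ => hf.comp (hU.iterate k)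

lemma birk_integrable {P : Measure Ω} {U : Ω → Ω} {f : Ω → ℝ}
    (hU : MeasurePreserving U P P) (hf : Integrable f P) (n : ℕ) :
    Integrable (birk U f n) P :=
  MeasureTheory.integrable_finset_sum _ fun k _ => ((hU.iterate k).integrable_comp hf.aestronglyMeasurable).mpr hf

lemma birk_nonneg {U : Ω → Ω} {f : Ω → ℝ} (hf : ∀ ω, 0 ≤ f ω) (n : ℕ) (ω : Ω) :
    0 ≤ birk U f n ω :=
  Finset.sum_nonneg fun k _ => hf _

/-- Iterated maximum `M N = max_{0 ≤ n ≤ N} S_n` with `S_0 = 0`. -/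
noncomputable def maxS (U : Ω → Ω) (f : Ω → ℝ) : ℕ → Ω → ℝ
  | 0 => fun _ => 0
  | (N + 1) => fun ω => max (maxS U f N ω) (birk U f (N + 1) ω)

lemma maxS_nonneg (U : Ω → Ω) (f : Ω → ℝ) (N : ℕ) (ω : Ω) : 0 ≤ maxS U f N ω := by
  induction N with
  | zero => simp [maxS]
  | succ N ih => exact le_trans ih (le_max_left _ _)

lemma maxS_measurable {U : Ω → Ω} {f : Ω → ℝ} (hU : Measurable U) (hf : Measurable f) (N : ℕ) :
    Measurable (maxS U f N) := by
  induction N with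
  | zero => exact measurable_const
  | succ N ih => exact ih.max (birk_measurable hU hf (N + 1))

lemma maxS_integrable {P : Measure Ω} {U : Ω → Ω} {f : Ω → ℝ}
    (hU : MeasurePreserving U P P) (hf : Integrable f P) (N : ℕ) :
    Integrable (maxS U f N) P := by
  induction N with
  | zero => exact integrable_zero _ _ _
  | succ N ih => exact ih.sup (birk_integrable hU hf (N + 1))

lemma birk_le_maxS (U : Ω → Ω) (f : Ω → ℝ) {n N : ℕ} (hn : n ≤ N) (ω : Ω) :
    birk U f n ω ≤ maxS U f N ω := by
  rcases Nat.eq_zero_or_pos n with rfl | h1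
  · simpa [birk] using maxS_nonneg U f N ω
  induction N with
  | zero => omega
  | succ N ih =>
    rcases Nat.lt_or_ge n (N + 1) with h | h
    · exact le_trans (ih (by omega)) (le_max_left _ _)
    · have : n = N + 1 := by omega
      subst this; exact le_max_right _ _

lemma maxS_key (U : Ω → Ω) (f : Ω → ℝ) (N : ℕ) (ω : Ω) :
    maxS U f N ω ≤ max 0 (f ω + maxS U f N (U ω)) := by
  induction N with
  | zero => simp [maxS]
  | succ N ih =>
    refine max_le (le_trans ih ?_) ?_
    · exact max_le_max le_rfl (by gcongr; exact le_max_left _ _)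
    · refine le_trans ?_ (le_max_right _ _)
      rw [birk_succ_left]
      gcongr
      exact birk_le_maxS U f (Nat.le_succ N) _

lemma maxS_pos_iff (U : Ω → Ω) (f : Ω → ℝ) (N : ℕ) (ω : Ω) :
    0 < maxS U f N ω ↔ ∃ n, 1 ≤ n ∧ n ≤ N ∧ 0 < birk U f n ω := by
  constructor
  · intro h
    induction N with
    | zero => simp [maxS] at h
    | succ N ih =>
      rcases lt_max_iff.mp h with h' | h'
      · obtain ⟨n, hn1, hn2, hn3⟩ := ih h'
        exact ⟨n, hn1, by omega, hn3⟩
      · exact ⟨N + 1, by omega, le_rfl, h'⟩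
  · rintro ⟨n, hn1, hn2, hn3⟩
    exact lt_of_lt_of_le hn3 (birk_le_maxS U f hn2 ω)

end KingmanAux
-- appended part (will merge)
namespace KingmanAux

variable {Ω : Type*} [MeasurableSpace Ω]

/-- Garsia's maximal ergodic lemma. -/
lemma garsia {P : Measure Ω} [IsProbabilityMeasure P] {U : Ω → Ω}
    (hU : MeasurePreserving U P P) {f : Ω → ℝ} (hm : Measurable f) (hi : Integrable f P)
    (N : ℕ) :
    0 ≤ ∫ ω in {ω | 0 < maxS U f N ω}, f ω ∂P := by
  set M := maxS U f N with hM
  set G : Set Ω := {ω | 0 < M ω} with hG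
  have hGmeas : MeasurableSet G := measurableSet_lt measurable_const (maxS_measurable hU.measurable hm N)
  have hMint : Integrable M P := maxS_integrable hU hi N
  have hMUint : Integrable (fun ω => M (U ω)) P :=
    (hU.integrable_comp hMint.aestronglyMeasurable).mpr hMint
  -- pointwise on G : M ω - M (U ω) ≤ f ω
  have key : ∀ ω ∈ G, M ω - M (U ω) ≤ f ω := by
    intro ω hω
    have h1 := maxS_key U f N ω
    rcases max_cases 0 (f ω + M (U ω)) with ⟨h2, _⟩ | ⟨h2, _⟩
    · rw [h2] at h1; exact absurd (lt_of_lt_of_le hω h1) (lt_irrefl 0)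
    · rw [h2] at h1; linarith
  have step1 : ∫ ω in G, (M ω - M (U ω)) ∂P ≤ ∫ ω in G, f ω ∂P := by
    refine setIntegral_mono_on (hMint.integrableOn.sub hMUint.integrableOn)
      hi.integrableOn hGmeas key
  have step2 : ∫ ω in G, (M ω - M (U ω)) ∂P
      = ∫ ω in G, M ω ∂P - ∫ ω in G, M (U ω) ∂P :=
    integral_sub hMint.integrableOn hMUint.integrableOn
  have step3 : ∫ ω in G, M ω ∂P = ∫ ω, M ω ∂P := by
    rw [← integral_indicator hGmeas]
    congr 1
    funext ω
    by_cases hω : ω ∈ G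
    · simp [Set.indicator_of_mem hω]
    · have h0 : M ω = 0 := le_antisymm (not_lt.mp hω) (maxS_nonneg U f N ω)
      simp [Set.indicator_of_notMem hω, h0]
  have step4 : ∫ ω in G, M (U ω) ∂P ≤ ∫ ω, M (U ω) ∂P :=
    setIntegral_le_integral hMUint (Filter.Eventually.of_forall fun ω => maxS_nonneg U f N (U ω))
  have step5 : ∫ ω, M (U ω) ∂P = ∫ ω, M ω ∂P := by
    have h := integral_map (φ := U) (f := M) hU.measurable.aemeasurable
      (by rw [hU.map_eq]; exact hMint.aestronglyMeasurable)
    rw [hU.map_eq] at h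
    exact h.symm
  linarith [step1, step2.symm.le, step3, step4, step5]

/-- Weak-type maximal inequality for nonnegative integrable functions. -/
lemma maximal_ineq {P : Measure Ω} [IsProbabilityMeasure P] {U : Ω → Ω}
    (hU : MeasurePreserving U P P) {φ : Ω → ℝ} (hm : Measurable φ) (hnn : ∀ ω, 0 ≤ φ ω)
    (hi : Integrable φ P) {lam : ℝ} (hlam : 0 < lam) :
    P {ω | ∃ n, 1 ≤ n ∧ lam * n < birk U φ n ω} ≤ ENNReal.ofReal ((∫ ω, φ ω ∂P) / lam) := by
  set f : Ω → ℝ := fun ω => φ ω - lam with hf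
  have hfm : Measurable f := hm.sub measurable_const
  have hfi : Integrable f P := hi.sub (integrable_const lam)
  have hbirkf : ∀ n ω, birk U f n ω = birk U φ n ω - lam * n := by
    intro n ω
    simp [birk, hf, Finset.sum_sub_distrib, mul_comm]
  set G : ℕ → Set Ω := fun N => {ω | 0 < maxS U f N ω} with hGdef
  have hGmeas : ∀ N, MeasurableSet (G N) :=
    fun N => measurableSet_lt measurable_const (maxS_measurable hU.measurable hfm N)
  have hGmono : Monotone G := by
    intro N N' hNN ω hω
    rw [hGdef, Set.mem_setOf_eq, maxS_pos_iff] at hω ⊢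
    obtain ⟨n, h1, h2, h3⟩ := hω
    exact ⟨n, h1, le_trans h2 hNN, h3⟩
  have hcover : {ω | ∃ n, 1 ≤ n ∧ lam * n < birk U φ n ω} = ⋃ N, G N := by
    ext ω
    simp only [Set.mem_setOf_eq, Set.mem_iUnion, hGdef, maxS_pos_iff]
    constructor
    · rintro ⟨n, h1, h3⟩
      exact ⟨n, n, h1, le_rfl, by rw [hbirkf]; linarith⟩
    · rintro ⟨N, n, h1, h2, h3⟩
      rw [hbirkf] at h3
      exact ⟨n, h1, by linarith⟩
  have hbound : ∀ N, P (G N) ≤ ENNReal.ofReal ((∫ ω, φ ω ∂P) / lam) := by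
    intro N
    have h0 := garsia hU hfm hfi N
    have hsplit : ∫ ω in G N, f ω ∂P
        = ∫ ω in G N, φ ω ∂P - lam * (P (G N)).toReal := by
      rw [hf]
      rw [integral_sub hi.integrableOn (integrable_const lam).integrableOn]
      congr 1
      rw [setIntegral_const]
      simp [mul_comm, Measure.restrict_apply_univ, Measure.real]
    have hle : lam * (P (G N)).toReal ≤ ∫ ω, φ ω ∂P := by
      have h1 : ∫ ω in G N, φ ω ∂P ≤ ∫ ω, φ ω ∂P :=
        setIntegral_le_integral hi (Filter.Eventually.of_forall hnn)
      rw [hsplit] at h0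
      linarith
    have hne : P (G N) ≠ ⊤ := measure_ne_top _ _
    rw [ENNReal.le_ofReal_iff_toReal_le hne]
    · rw [le_div_iff₀ hlam]; linarith [hle]
    · exact div_nonneg (integral_nonneg hnn) hlam.le
  rw [hcover]
  rw [(hGmono.directed_le).measure_iUnion]
  exact iSup_le hbound

end KingmanAux
namespace KingmanAux

variable {Ω : Type*} [MeasurableSpace Ω]

lemma tsum_tail_meas {P : Measure Ω} [IsProbabilityMeasure P] {φ : Ω → ℝ}
    (hm : Measurable φ) (hnn : ∀ ω, 0 ≤ φ ω) (hi : Integrable φ P) {ε : ℝ} (hε : 0 < ε) :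
    ∑' n : ℕ, P {x | ε * (n + 1) ≤ φ x} ≠ ⊤ := by
  set A : ℕ → Set Ω := fun n => {x | ε * (n + 1) ≤ φ x} with hA
  have hmeasA : ∀ n : ℕ, MeasurableSet (A n) := fun n => measurableSet_le measurable_const hm
  have hbound : ∀ m : ℕ, ∑ n ∈ Finset.range m, P (A n)
      ≤ ∫⁻ x, ENNReal.ofReal (φ x / ε) ∂P := by
    intro m
    calc ∑ n ∈ Finset.range m, P (A n)
        = ∫⁻ x, (∑ n ∈ Finset.range m, Set.indicator (A n) (fun _ => (1 : ℝ≥0∞)) x) ∂P := by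
          rw [lintegral_finset_sum _ (fun n _ => measurable_const.indicator (hmeasA n))]
          exact Finset.sum_congr rfl fun n _ => (lintegral_indicator_one (hmeasA n)).symm
      _ ≤ ∫⁻ x, ENNReal.ofReal (φ x / ε) ∂P := by
          refine lintegral_mono fun x => ?_
          set K : ℕ := Nat.floor (φ x / ε) with hK
          have hφε : 0 ≤ φ x / ε := div_nonneg (hnn x) hε.le
          have hterm : ∀ n : ℕ, Set.indicator (A n) (fun _ => (1 : ℝ≥0∞)) x
              ≤ if n < K then 1 else 0 := by
            intro n
            by_cases hx : x ∈ A n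
            · rw [Set.indicator_of_mem hx]
              have hxle : ε * (n + 1) ≤ φ x := hx
              have : (n : ℝ) + 1 ≤ φ x / ε := by
                rw [le_div_iff₀ hε]; linarith
              have hnK : n < K := by
                have : (n + 1 : ℕ) ≤ K := Nat.le_floor (by push_cast; linarith)
                omega
              simp [hnK]
            · rw [Set.indicator_of_notMem hx]
              exact zero_le
          calc (∑ n ∈ Finset.range m, Set.indicator (A n) (fun _ => (1 : ℝ≥0∞)) x)
              ≤ ∑ n ∈ Finset.range m, if n < K then (1 : ℝ≥0∞) else 0 :=
                Finset.sum_le_sum fun n _ => hterm n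
            _ = ((Finset.range m).filter (fun n => n < K)).card := by
                rw [← Finset.sum_filter]; simp
            _ ≤ (K : ℝ≥0∞) := by
                have hsub : (Finset.range m).filter (fun n => n < K) ⊆ Finset.range K := by
                  intro n hn
                  simp only [Finset.mem_filter, Finset.mem_range] at hn ⊢
                  exact hn.2
                have := Finset.card_le_card hsub
                simp only [Finset.card_range] at this
                exact_mod_cast this
            _ ≤ ENNReal.ofReal (φ x / ε) := by
                rw [← ENNReal.ofReal_natCast]
                exact ENNReal.ofReal_le_ofReal (Nat.floor_le hφε)
  have hfin : ∫⁻ x, ENNReal.ofReal (φ x / ε) ∂P < ⊤ := (hi.div_const ε).lintegral_lt_top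
  have hmain : (∑' n : ℕ, P (A n)) ≠ ⊤ := by
    rw [ENNReal.tsum_eq_iSup_sum]
    refine ne_top_of_le_ne_top hfin.ne (iSup_le fun s => ?_)
    obtain ⟨m, hm'⟩ := s.exists_nat_subset_range
    exact le_trans (Finset.sum_le_sum_of_subset hm') (hbound m)
  exact hmain

/-- Borel–Cantelli: along the orbit, `φ (U^[n] ω) / n → 0` almost everywhere. -/
lemma ae_orbit_div_tendsto_zero {P : Measure Ω} [IsProbabilityMeasure P] {U : Ω → Ω}
    (hU : MeasurePreserving U P P) {φ : Ω → ℝ}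
    (hm : Measurable φ) (hnn : ∀ ω, 0 ≤ φ ω) (hi : Integrable φ P) :
    ∀ᵐ ω ∂P, Tendsto (fun n : ℕ => φ (U^[n] ω) / n) atTop (𝓝 0) := by
  have key : ∀ m : ℕ, ∀ᵐ ω ∂P, ∀ᶠ n : ℕ in atTop,
      ω ∉ U^[n] ⁻¹' {x | (1 : ℝ) / (m + 1) * (n + 1) ≤ φ x} := by
    intro m
    have hε : (0 : ℝ) < 1 / (m + 1) := by positivity
    refine ae_eventually_notMem ?_
    have heq : ∀ n : ℕ, P (U^[n] ⁻¹' {x | (1 : ℝ) / (m + 1) * (n + 1) ≤ φ x})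
        = P {x | (1 : ℝ) / (m + 1) * (n + 1) ≤ φ x} := fun n =>
      (hU.iterate n).measure_preimage (measurableSet_le measurable_const hm).nullMeasurableSet
    simp only [heq]
    exact tsum_tail_meas hm hnn hi hε
  rw [← ae_all_iff] at key
  filter_upwards [key] with ω hω
  rw [Metric.tendsto_atTop]
  intro δ hδ
  obtain ⟨m, hmδ⟩ : ∃ m : ℕ, 2 / (m + 1 : ℝ) < δ := by
    obtain ⟨m, hm'⟩ := exists_nat_gt (2 / δ)
    refine ⟨m, ?_⟩
    rw [div_lt_iff₀ (by positivity)]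
    rw [div_lt_iff₀ hδ] at hm'
    nlinarith [hδ]
  obtain ⟨N, hN⟩ := (eventually_atTop).mp (hω m)
  refine ⟨max N 1, fun n hn => ?_⟩
  have hn1 : 1 ≤ n := le_trans (le_max_right _ _) hn
  have hnN : N ≤ n := le_trans (le_max_left _ _) hn
  have h2 := hN n hnN
  simp only [Set.mem_preimage, Set.mem_setOf_eq, not_le] at h2
  rw [Real.dist_eq, sub_zero, abs_of_nonneg (div_nonneg (hnn _) (Nat.cast_nonneg n))]
  have hnpos : (0 : ℝ) < n := by exact_mod_cast hn1
  rw [div_lt_iff₀ hnpos]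
  have hle : (n : ℝ) + 1 ≤ 2 * n := by
    have : (1 : ℝ) ≤ n := by exact_mod_cast hn1
    linarith
  have hεpos : (0:ℝ) < 1 / (m+1) := by positivity
  calc φ (U^[n] ω) < 1 / (m + 1) * (n + 1) := h2
    _ ≤ 1 / (m + 1) * (2 * n) := by nlinarith
    _ = 2 / (m + 1) * n := by ring
    _ < δ * n := by nlinarith [hmδ, hnpos]

end KingmanAux
namespace KingmanAux

variable {Ω : Type*} [MeasurableSpace Ω]

lemma chain {U : Ω → Ω} {W : ℕ → Ω → ℝ}
    (hsub : ∀ m n : ℕ, ∀ ω, W (n + m) ω ≤ W n ω + W m (U^[n] ω)) :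
    ∀ n, 1 ≤ n → ∀ y, W n y ≤ birk U (W 1) n y := by
  intro n
  induction n with
  | zero => omega
  | succ n ih =>
    intro _ y
    rcases Nat.eq_zero_or_pos n with rfl | hn
    · simp [birk]
    · have h1 := hsub 1 n y
      have h2 := ih hn y
      rw [birk, Finset.sum_range_succ, ← birk]
      linarith

lemma chain_shift {U : Ω → Ω} {W : ℕ → Ω → ℝ}
    (hsub : ∀ m n : ℕ, ∀ ω, W (n + m) ω ≤ W n ω + W m (U^[n] ω))
    {r : ℕ} (hr : 1 ≤ r) (j : ℕ) (ω : Ω) :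
    W r (U^[j] ω) ≤ ∑ k ∈ Finset.Ico j (j + r), W 1 (U^[k] ω) := by
  have h1 := chain hsub r hr (U^[j] ω)
  refine le_trans h1 (le_of_eq ?_)
  rw [birk, Finset.sum_Ico_eq_sum_range]
  simp only [Nat.add_sub_cancel_left]
  refine Finset.sum_congr rfl fun k _ => ?_
  rw [add_comm j k, Function.iterate_add_apply]

/-- The Steele covering inequality. -/
lemma covering {U : Ω → Ω} {W : ℕ → Ω → ℝ}
    (hnonneg : ∀ n ω, 0 ≤ W n ω)
    (hsub : ∀ m n : ℕ, ∀ ω, W (n + m) ω ≤ W n ω + W m (U^[n] ω))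
    (g : Ω → ℝ) {ε : ℝ} (hε : 0 < ε) {N : ℕ} (hN : 1 ≤ N) (ω : Ω)
    (hginv : ∀ k, g (U^[k] ω) = g ω) (hg0 : 0 ≤ g ω)
    (A : Set Ω) (hA : A = {x | ∃ n, 1 ≤ n ∧ n ≤ N ∧ W n x ≤ n * (g x + ε)}) :
    ∀ r j, 1 ≤ r → W r (U^[j] ω) ≤ r * (g ω + ε)
      + (∑ k ∈ Finset.Ico j (j + r), Aᶜ.indicator (W 1) (U^[k] ω))
      + (∑ k ∈ Finset.Ico (max j (j + r - N)) (j + r), W 1 (U^[k] ω)) := by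
  intro r
  induction r using Nat.strong_induction_on with
  | _ r IH =>
    intro j hr
    have hphi_nonneg : ∀ k : ℕ, 0 ≤ (Aᶜ.indicator (W 1) (U^[k] ω)) :=
      fun k => Set.indicator_nonneg (fun x _ => hnonneg 1 x) _
    have hgε : 0 ≤ g ω + ε := by linarith
    rcases le_or_gt r N with hrN | hrN
    · -- short blocks: use the chain bound, the tail window covers everything
      have hmax : max j (j + r - N) = j := max_eq_left (by omega)
      rw [hmax]
      have h1 := chain_shift hsub hr j ω
      have h2 : 0 ≤ (r : ℝ) * (g ω + ε) := by positivity
      have h3 : 0 ≤ ∑ k ∈ Finset.Ico j (j + r),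
          (Aᶜ.indicator (W 1) (U^[k] ω)) :=
        Finset.sum_nonneg fun k _ => hphi_nonneg k
      linarith
    · by_cases hmem : U^[j] ω ∈ A
      · -- long jump using the defining property of A
        rw [hA] at hmem
        obtain ⟨n, hn1, hnN, hWn⟩ := hmem
        rw [hginv j] at hWn
        have hnr : n < r := lt_of_le_of_lt hnN hrN
        have hsub1 := hsub (r - n) n (U^[j] ω)
        rw [(by omega : n + (r - n) = r)] at hsub1
        have hiter : U^[n] (U^[j] ω) = U^[j + n] ω := by
          rw [add_comm j n, Function.iterate_add_apply]
        rw [hiter] at hsub1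
        have hIH := IH (r - n) (by omega) (j + n) (by omega)
        rw [(by omega : j + n + (r - n) = j + r)] at hIH
        have hφsub : (∑ k ∈ Finset.Ico (j + n) (j + r),
              Aᶜ.indicator (W 1) (U^[k] ω))
            ≤ ∑ k ∈ Finset.Ico j (j + r), Aᶜ.indicator (W 1) (U^[k] ω) := by
          refine Finset.sum_le_sum_of_subset_of_nonneg ?_ (fun k _ _ => hphi_nonneg k)
          exact Finset.Ico_subset_Ico (by omega) le_rfl
        have htailsub : (∑ k ∈ Finset.Ico (max (j + n) (j + r - N)) (j + r), W 1 (U^[k] ω))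
            ≤ ∑ k ∈ Finset.Ico (max j (j + r - N)) (j + r), W 1 (U^[k] ω) := by
          refine Finset.sum_le_sum_of_subset_of_nonneg ?_ (fun k _ _ => hnonneg 1 _)
          exact Finset.Ico_subset_Ico (by omega) le_rfl
        have hcast : ((r - n : ℕ) : ℝ) = (r : ℝ) - n := by
          push_cast [Nat.cast_sub hnr.le]; ring
        calc W r (U^[j] ω) ≤ W n (U^[j] ω) + W (r - n) (U^[j + n] ω) := hsub1
          _ ≤ n * (g ω + ε) + ((r - n : ℕ) * (g ω + ε)
              + (∑ k ∈ Finset.Ico (j + n) (j + r), Aᶜ.indicator (W 1) (U^[k] ω))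
              + (∑ k ∈ Finset.Ico (max (j + n) (j + r - N)) (j + r), W 1 (U^[k] ω))) := by
            exact add_le_add hWn hIH
          _ ≤ r * (g ω + ε)
              + (∑ k ∈ Finset.Ico j (j + r), Aᶜ.indicator (W 1) (U^[k] ω))
              + (∑ k ∈ Finset.Ico (max j (j + r - N)) (j + r), W 1 (U^[k] ω)) := by
            rw [hcast]
            have : (n : ℝ) * (g ω + ε) + ((r : ℝ) - n) * (g ω + ε) = r * (g ω + ε) := by ring
            linarith [hφsub, htailsub]
      · -- single step, paying the φ-term
        have hr2 : 2 ≤ r := by omega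
        have hsub1 := hsub (r - 1) 1 (U^[j] ω)
        rw [(by omega : 1 + (r - 1) = r)] at hsub1
        have hiter : U^[1] (U^[j] ω) = U^[j + 1] ω := by
          rw [add_comm j 1, Function.iterate_add_apply]
        rw [hiter] at hsub1
        have hIH := IH (r - 1) (by omega) (j + 1) (by omega)
        rw [(by omega : j + 1 + (r - 1) = j + r)] at hIH
        have hφeq : (∑ k ∈ Finset.Ico j (j + r), Aᶜ.indicator (W 1) (U^[k] ω))
            = W 1 (U^[j] ω)
              + ∑ k ∈ Finset.Ico (j + 1) (j + r), Aᶜ.indicator (W 1) (U^[k] ω) := by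
          rw [Finset.sum_eq_sum_Ico_succ_bot (by omega : j < j + r),
            Set.indicator_of_mem (Set.mem_compl hmem)]
        have htailsub : (∑ k ∈ Finset.Ico (max (j + 1) (j + r - N)) (j + r), W 1 (U^[k] ω))
            ≤ ∑ k ∈ Finset.Ico (max j (j + r - N)) (j + r), W 1 (U^[k] ω) := by
          refine Finset.sum_le_sum_of_subset_of_nonneg ?_ (fun k _ _ => hnonneg 1 _)
          exact Finset.Ico_subset_Ico (by omega) le_rfl
        have hcast : ((r - 1 : ℕ) : ℝ) = (r : ℝ) - 1 := by
          push_cast [Nat.cast_sub (by omega : 1 ≤ r)]; ring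
        have hmono : ((r : ℝ) - 1) * (g ω + ε) ≤ r * (g ω + ε) := by nlinarith
        calc W r (U^[j] ω) ≤ W 1 (U^[j] ω) + W (r - 1) (U^[j + 1] ω) := hsub1
          _ ≤ W 1 (U^[j] ω) + ((r - 1 : ℕ) * (g ω + ε)
              + (∑ k ∈ Finset.Ico (j + 1) (j + r), Aᶜ.indicator (W 1) (U^[k] ω))
              + (∑ k ∈ Finset.Ico (max (j + 1) (j + r - N)) (j + r), W 1 (U^[k] ω))) := by
            exact add_le_add le_rfl hIH
          _ ≤ r * (g ω + ε)
              + (∑ k ∈ Finset.Ico j (j + r), Aᶜ.indicator (W 1) (U^[k] ω))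
              + (∑ k ∈ Finset.Ico (max j (j + r - N)) (j + r), W 1 (U^[k] ω)) := by
            rw [hφeq, hcast]
            linarith [htailsub, hmono]

end KingmanAux
namespace KingmanAux

variable {Ω : Type*} [MeasurableSpace Ω]

lemma real_le_of_forall_pos_le_add {a b : ℝ} (h : ∀ ε, 0 < ε → a ≤ b + ε) : a ≤ b := by
  by_contra hlt
  push_neg at hlt
  have := h ((a - b) / 2) (by linarith)
  linarith

lemma integral_comp_eq {P : Measure Ω} {U : Ω → Ω} (hU : MeasurePreserving U P P)
    {f : Ω → ℝ} (hf : AEStronglyMeasurable f P) :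
    ∫ ω, f (U ω) ∂P = ∫ ω, f ω ∂P := by
  have h := integral_map (φ := U) (f := f) hU.measurable.aemeasurable
    (by rw [hU.map_eq]; exact hf)
  rw [hU.map_eq] at h
  exact h.symm

lemma tendsto_div_succ (C : ℝ) : Tendsto (fun n : ℕ => C / ((n:ℝ) + 1)) atTop (𝓝 0) := by
  have h := (tendsto_const_div_atTop_nhds_zero_nat C).comp (tendsto_add_atTop_nat 1)
  refine h.congr fun n => ?_
  simp only [Function.comp_apply]
  push_cast
  ring

lemma ae_comp {P : Measure Ω} {U : Ω → Ω} (hU : MeasurePreserving U P P)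
    {p : Ω → Prop} (hp : ∀ᵐ ω ∂P, p ω) : ∀ᵐ ω ∂P, p (U ω) :=
  hU.quasiMeasurePreserving.tendsto_ae.eventually hp

lemma ae_comp_iterate {P : Measure Ω} {U : Ω → Ω} (hU : MeasurePreserving U P P) (k : ℕ)
    {p : Ω → Prop} (hp : ∀ᵐ ω ∂P, p ω) : ∀ᵐ ω ∂P, p (U^[k] ω) :=
  (hU.iterate k).quasiMeasurePreserving.tendsto_ae.eventually hp

end KingmanAux

open KingmanAux

/-- Kingman's subadditive ergodic theorem. -/
theorem kingman_subadditive_ergodic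
    {Ω : Type*} [MeasurableSpace Ω] (P : Measure Ω) [IsProbabilityMeasure P]
    (U : Ω → Ω) (hU : MeasurePreserving U P P)
    (W : ℕ → Ω → ℝ)
    (hmeas : ∀ n, Measurable (W n))
    (hnonneg : ∀ n ω, 0 ≤ W n ω)
    (hsub : ∀ m n : ℕ, ∀ ω, W (n + m) ω ≤ W n ω + W m (U^[n] ω))
    (hint : Integrable (W 1) P) :
    ∃ Winf : Ω → ℝ,
      (∀ᵐ ω ∂P, Winf (U ω) = Winf ω) ∧
      (∀ᵐ ω ∂P, Tendsto (fun n : ℕ => W n ω / n) atTop (𝓝 (Winf ω))) ∧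
      (Ergodic U P → ∃ c : ℝ, ∀ᵐ ω ∂P, Winf ω = c) := by
  classical
  set g : Ω → ℝ := fun ω => liminf (fun n : ℕ => W n ω / n) atTop with hgdef
  have hgmeas : Measurable g := Measurable.liminf (fun n => (hmeas n).div_const n)
  have hW1meas := hmeas 1
  have hW1nn := hnonneg 1
  have hu0 : ∀ ω (n : ℕ), (0:ℝ) ≤ W n ω / n :=
    fun ω n => div_nonneg (hnonneg n ω) (Nat.cast_nonneg n)
  have hchain : ∀ n, 1 ≤ n → ∀ ω, W n ω ≤ birk U (W 1) n ω := chain hsub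
  -- a.e. boundedness of Birkhoff sums
  have hbddae : ∀ᵐ ω ∂P, ∃ C : ℝ, 0 ≤ C ∧ ∀ n, 1 ≤ n → birk U (W 1) n ω ≤ C * n := by
    set B : ℕ → Set Ω := fun m => {ω | ∃ n, 1 ≤ n ∧ ((m:ℝ) + 1) * n < birk U (W 1) n ω} with hB
    have hPB : ∀ m : ℕ, P (B m) ≤ ENNReal.ofReal ((∫ ω, W 1 ω ∂P) / ((m:ℝ) + 1)) := by
      intro m
      exact maximal_ineq hU hW1meas hW1nn hint (by positivity)
    have hK : P (⋂ m, B m) = 0 := by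
      refine le_antisymm ?_ zero_le
      have htt : Tendsto (fun m : ℕ => ENNReal.ofReal ((∫ ω, W 1 ω ∂P) / ((m:ℝ) + 1)))
          atTop (𝓝 0) := by
        have h1 : Tendsto (fun m : ℕ => (∫ ω, W 1 ω ∂P) / ((m:ℝ) + 1)) atTop (𝓝 0) :=
          tendsto_div_succ _
        have h2 := ENNReal.tendsto_ofReal h1
        simpa using h2
      exact ge_of_tendsto' htt fun m =>
        le_trans (measure_mono (Set.iInter_subset B m)) (hPB m)
    have hae := (measure_eq_zero_iff_ae_notMem (μ := P)).mp hK
    filter_upwards [hae] with ω hω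
    simp only [Set.mem_iInter, not_forall] at hω
    obtain ⟨m, hm⟩ := hω
    refine ⟨(m:ℝ) + 1, by positivity, fun n hn => ?_⟩
    by_contra hcon
    push_neg at hcon
    exact hm ⟨n, hn, hcon⟩
  -- boundedness of the sequence of averages from a Birkhoff bound
  have hbdd_of : ∀ ω (C : ℝ), (∀ n, 1 ≤ n → birk U (W 1) n ω ≤ C * n) →
      IsBoundedUnder (· ≤ ·) atTop (fun n : ℕ => W n ω / n) := by
    intro ω C hC
    refine isBoundedUnder_of_eventually_le (a := C) (eventually_atTop.2 ⟨1, fun n hn => ?_⟩)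
    have hnpos : (0:ℝ) < n := by exact_mod_cast hn
    rw [div_le_iff₀ hnpos]
    exact le_trans (hchain n hn ω) (hC n hn)
  -- a.e. nonnegativity of g
  have hg0ae : ∀ᵐ ω ∂P, 0 ≤ g ω := by
    filter_upwards [hbddae] with ω hb
    obtain ⟨C, hC0, hC⟩ := hb
    exact le_liminf_of_le (hbdd_of ω C hC).isCoboundedUnder_ge
      (Eventually.of_forall fun n => hu0 ω n)
  -- the step inequality g ≤ g ∘ U a.e.
  have hstep : ∀ᵐ ω ∂P, g ω ≤ g (U ω) := by
    filter_upwards [hbddae, ae_comp hU hbddae] with ω hb hbU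
    obtain ⟨D, hD0, hD⟩ := hbU
    have hvb : IsBoundedUnder (· ≤ ·) atTop (fun n : ℕ => W n (U ω) / n) :=
      hbdd_of (U ω) D hD
    apply real_le_of_forall_pos_le_add
    intro ε hε
    have hfreq : ∃ᶠ n in atTop, W n (U ω) / n < g (U ω) + ε / 2 := by
      refine frequently_lt_of_liminf_lt hvb.isCoboundedUnder_ge ?_
      have : g (U ω) = liminf (fun n : ℕ => W n (U ω) / n) atTop := by rw [hgdef]
      rw [← this]
      linarith
    have hev : ∀ᶠ n : ℕ in atTop, W 1 ω / ((n:ℝ) + 1) ≤ ε / 2 ∧ 1 ≤ n := by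
      have h2 : Tendsto (fun n : ℕ => W 1 ω / ((n:ℝ) + 1)) atTop (𝓝 0) :=
        tendsto_div_succ _
      have h3 : ∀ᶠ n : ℕ in atTop, W 1 ω / ((n:ℝ) + 1) ≤ ε / 2 := by
        have := h2.eventually (eventually_le_nhds (by linarith : (0:ℝ) < ε / 2))
        exact this
      exact h3.and (eventually_ge_atTop 1)
    have hfreq2 : ∃ᶠ m : ℕ in atTop, W m ω / m ≤ g (U ω) + ε := by
      rw [frequently_atTop]
      intro a
      obtain ⟨n, hna, hn1, hn2⟩ := frequently_atTop.1 (hfreq.and_eventually hev) a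
      refine ⟨n + 1, by omega, ?_⟩
      have hnpos : (0:ℝ) < n := by exact_mod_cast hn2.2
      have hn1pos : (0:ℝ) < (n:ℝ) + 1 := by positivity
      have hsub1 := hsub n 1 ω
      rw [Function.iterate_one] at hsub1
      have hcast : ((n + 1 : ℕ) : ℝ) = (n:ℝ) + 1 := by push_cast; ring
      have step1 : W (n + 1) ω ≤ W 1 ω + W n (U ω) := by
        rw [add_comm n 1]; exact hsub1
      have step2 : W n (U ω) / ((n:ℝ) + 1) ≤ W n (U ω) / n :=
        div_le_div_of_nonneg_left (hnonneg n (U ω)) hnpos (by linarith)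
      calc W (n+1) ω / ((n+1 : ℕ):ℝ) = W (n+1) ω / ((n:ℝ)+1) := by rw [hcast]
        _ ≤ (W 1 ω + W n (U ω)) / ((n:ℝ) + 1) := by
            gcongr
        _ = W 1 ω / ((n:ℝ) + 1) + W n (U ω) / ((n:ℝ) + 1) := by rw [add_div]
        _ ≤ ε / 2 + W n (U ω) / n := add_le_add hn2.1 step2
        _ ≤ ε / 2 + (g (U ω) + ε / 2) := add_le_add le_rfl hn1.le
        _ = g (U ω) + ε := by ring
    show liminf (fun n : ℕ => W n ω / n) atTop ≤ g (U ω) + ε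
    exact liminf_le_of_frequently_le hfreq2
      (isBoundedUnder_of_eventually_ge (a := 0) (Eventually.of_forall fun n : ℕ => hu0 ω n))
  -- invariance of g
  have hinv : ∀ᵐ ω ∂P, g (U ω) = g ω := by
    have hM : ∀ M : ℕ, ∀ᵐ ω ∂P, max 0 (min (g (U ω)) (M:ℝ)) = max 0 (min (g ω) (M:ℝ)) := by
      intro M
      set gM : Ω → ℝ := fun ω => max 0 (min (g ω) (M:ℝ)) with hgM
      have hgMmeas : Measurable gM := measurable_const.max (hgmeas.min measurable_const)
      have hgMbd : ∀ ω, ‖gM ω‖ ≤ (M:ℝ) := by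
        intro ω
        rw [Real.norm_eq_abs, abs_of_nonneg (le_max_left _ _)]
        exact max_le (Nat.cast_nonneg M) (min_le_right _ _)
      have hgMint : Integrable gM P :=
        (integrable_const (M:ℝ)).mono' hgMmeas.aestronglyMeasurable
          (Eventually.of_forall hgMbd)
      have hgMUint : Integrable (fun ω => gM (U ω)) P :=
        (hU.integrable_comp hgMint.aestronglyMeasurable).mpr hgMint
      have hle : ∀ᵐ ω ∂P, gM ω ≤ gM (U ω) := by
        filter_upwards [hstep] with ω hω
        exact max_le_max le_rfl (min_le_min hω le_rfl)
      have hieq : ∫ ω, (gM (U ω) - gM ω) ∂P = 0 := by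
        rw [integral_sub hgMUint hgMint,
          integral_comp_eq hU hgMint.aestronglyMeasurable, sub_self]
      have hsubint : Integrable ((fun ω => gM (U ω)) - gM) P := hgMUint.sub hgMint
      have hieq' : ∫ ω, ((fun ω => gM (U ω)) - gM) ω ∂P = 0 := by
        simpa [Pi.sub_apply] using hieq
      have hzero := (integral_eq_zero_iff_of_nonneg_ae
        (hle.mono fun ω hω => by simp only [Pi.zero_apply, Pi.sub_apply]; linarith)
        hsubint).mp hieq'
      filter_upwards [hzero] with ω hω
      have h0 : gM (U ω) - gM ω = 0 := by simpa [Pi.sub_apply] using hω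
      have := sub_eq_zero.mp h0
      simpa [hgM] using this
    have hMall : ∀ᵐ ω ∂P, ∀ M : ℕ, max 0 (min (g (U ω)) (M:ℝ)) = max 0 (min (g ω) (M:ℝ)) :=
      ae_all_iff.2 hM
    filter_upwards [hMall, hg0ae, ae_comp hU hg0ae] with ω hM' h0 h0U
    set M : ℕ := max ⌈g ω⌉₊ ⌈g (U ω)⌉₊ with hMdef
    have h1 : g ω ≤ (M:ℝ) := le_trans (Nat.le_ceil _) (by exact_mod_cast Nat.le_max_left _ _)
    have h2 : g (U ω) ≤ (M:ℝ) := le_trans (Nat.le_ceil _) (by exact_mod_cast Nat.le_max_right _ _)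
    have := hM' M
    rw [min_eq_left h2, min_eq_left h1, max_eq_right h0U, max_eq_right h0] at this
    exact this
  -- orbitwise invariance
  have hinvk : ∀ᵐ ω ∂P, ∀ k : ℕ, g (U^[k] ω) = g ω := by
    refine ae_all_iff.2 fun k => ?_
    induction k with
    | zero => simp
    | succ k ih =>
      have h2 := ae_comp_iterate hU k hinv
      filter_upwards [ih, h2] with ω h1 h2'
      rw [Function.iterate_succ_apply', h2', h1]
  -- the sets A and functions φ
  set A : ℕ → ℕ → Set Ω :=
    fun e N => {x | ∃ n, 1 ≤ n ∧ n ≤ N ∧ W n x ≤ n * (g x + 1/((e:ℝ)+1))} with hA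
  have hAmeas : ∀ e N, MeasurableSet (A e N) := by
    intro e N
    have heq : A e N = ⋃ n ∈ Finset.Icc 1 N, {x | W n x ≤ n * (g x + 1/((e:ℝ)+1))} := by
      ext x
      simp only [hA, Set.mem_setOf_eq, Set.mem_iUnion, Finset.mem_Icc, exists_prop]
      constructor
      · rintro ⟨n, h1, h2, h3⟩; exact ⟨n, ⟨h1, h2⟩, h3⟩
      · rintro ⟨n, ⟨h1, h2⟩, h3⟩; exact ⟨n, h1, h2, h3⟩
    rw [heq]
    refine Set.Finite.measurableSet_biUnion (Finset.finite_toSet _) fun n _ => ?_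
    exact measurableSet_le (hmeas n) (((hgmeas.add_const _).const_mul _))
  have hAmono : ∀ e N N', N ≤ N' → A e N ⊆ A e N' := by
    intro e N N' hNN x hx
    obtain ⟨n, h1, h2, h3⟩ := hx
    exact ⟨n, h1, le_trans h2 hNN, h3⟩
  set φ : ℕ → ℕ → Ω → ℝ := fun e N => (A e N)ᶜ.indicator (W 1) with hφ
  have hφmeas : ∀ e N, Measurable (φ e N) := fun e N => hW1meas.indicator (hAmeas e N).compl
  have hφnn : ∀ e N x, 0 ≤ φ e N x := fun e N x =>
    Set.indicator_nonneg (fun y _ => hW1nn y) x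
  have hφle : ∀ e N x, φ e N x ≤ W 1 x := by
    intro e N x
    by_cases hx : x ∈ (A e N)ᶜ
    · rw [hφ]; simp only; rw [Set.indicator_of_mem hx]
    · rw [hφ]; simp only; rw [Set.indicator_of_notMem hx]; exact hW1nn x
  have hφint : ∀ e N, Integrable (φ e N) P := by
    intro e N
    refine hint.mono' (hφmeas e N).aestronglyMeasurable ?_
    refine Eventually.of_forall fun x => ?_
    rw [Real.norm_eq_abs, abs_of_nonneg (hφnn e N x)]
    exact hφle e N x
  -- the integrals of φ e N tend to 0 as N → ∞
  have hφtend : ∀ e, Tendsto (fun N => ∫ ω, φ e N ω ∂P) atTop (𝓝 0) := by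
    intro e
    have hptw : ∀ᵐ ω ∂P, Tendsto (fun N => φ e N ω) atTop (𝓝 0) := by
      filter_upwards [hbddae] with ω hb
      obtain ⟨C, hC0, hC⟩ := hb
      have hεpos : (0:ℝ) < 1/((e:ℝ)+1) := by positivity
      have hlt : liminf (fun n : ℕ => W n ω / n) atTop < g ω + 1/((e:ℝ)+1) := by
        have : g ω = liminf (fun n : ℕ => W n ω / n) atTop := by rw [hgdef]
        rw [← this]; linarith
      have hfr := frequently_lt_of_liminf_lt (hbdd_of ω C hC).isCoboundedUnder_ge hlt
      obtain ⟨n, hnlt, hn1⟩ := (hfr.and_eventually (eventually_ge_atTop 1)).exists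
      have hnpos : (0:ℝ) < n := by exact_mod_cast hn1
      have hmem : ∀ N, n ≤ N → ω ∈ A e N := by
        intro N hN
        refine ⟨n, hn1, hN, ?_⟩
        rw [div_lt_iff₀ hnpos] at hnlt
        linarith [hnlt]
      refine tendsto_const_nhds.congr' ?_
      filter_upwards [eventually_ge_atTop n] with N hN
      rw [hφ]
      simp only
      rw [Set.indicator_of_notMem (by simp [hmem N hN])]
    have hdc := tendsto_integral_of_dominated_convergence (μ := P) (W 1)
      (fun N => (hφmeas e N).aestronglyMeasurable) hint
      (fun N => Eventually.of_forall fun ω => by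
        rw [Real.norm_eq_abs, abs_of_nonneg (hφnn e N ω)]; exact hφle e N ω)
      hptw
    simpa using hdc
  -- a.e. smallness of the maximal function of φ e N for large N
  have hgoodN : ∀ᵐ ω ∂P, ∀ e l : ℕ, ∃ N, ∀ n, 1 ≤ n →
      birk U (φ e N) n ω ≤ (1/((l:ℝ)+1)) * n := by
    refine ae_all_iff.2 fun e => ae_all_iff.2 fun l => ?_
    set Bad : ℕ → Set Ω :=
      fun N => {ω | ∃ n, 1 ≤ n ∧ (1/((l:ℝ)+1)) * n < birk U (φ e N) n ω} with hBad
    have hlampos : (0:ℝ) < 1/((l:ℝ)+1) := by positivity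
    have hPBad : ∀ N, P (Bad N)
        ≤ ENNReal.ofReal ((∫ ω, φ e N ω ∂P) / (1/((l:ℝ)+1))) := by
      intro N
      exact maximal_ineq hU (hφmeas e N) (hφnn e N) (hφint e N) hlampos
    have hK : P (⋂ N, Bad N) = 0 := by
      refine le_antisymm ?_ zero_le
      have htt : Tendsto
          (fun N : ℕ => ENNReal.ofReal ((∫ ω, φ e N ω ∂P) / (1/((l:ℝ)+1))))
          atTop (𝓝 0) := by
        have h1 : Tendsto (fun N : ℕ => (∫ ω, φ e N ω ∂P) / (1/((l:ℝ)+1))) atTop (𝓝 0) := by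
          have := (hφtend e).div_const (1/((l:ℝ)+1))
          simpa using this
        have h2 := ENNReal.tendsto_ofReal h1
        simpa using h2
      exact ge_of_tendsto' htt fun N =>
        le_trans (measure_mono (Set.iInter_subset Bad N)) (hPBad N)
    filter_upwards [(measure_eq_zero_iff_ae_notMem (μ := P)).mp hK] with ω hω
    simp only [Set.mem_iInter, not_forall] at hω
    obtain ⟨N, hN⟩ := hω
    refine ⟨N, fun n hn => ?_⟩
    by_contra hcon
    push_neg at hcon
    exact hN ⟨n, hn, hcon⟩
  have hBC := ae_orbit_div_tendsto_zero hU hW1meas hW1nn hint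
  refine ⟨g, hinv, ?_, ?_⟩
  · -- a.e. convergence
    filter_upwards [hbddae, hinvk, hg0ae, hgoodN, hBC] with ω hb hok hg0 hgood hbc
    obtain ⟨C, hC0, hC⟩ := hb
    have hbdd : IsBoundedUnder (· ≤ ·) atTop (fun n : ℕ => W n ω / n) := hbdd_of ω C hC
    have hbdd' : IsBoundedUnder (· ≥ ·) atTop (fun n : ℕ => W n ω / n) :=
      isBoundedUnder_of_eventually_ge (a := 0) (Eventually.of_forall fun n : ℕ => hu0 ω n)
    have hliminf : g ω ≤ liminf (fun n : ℕ => W n ω / n) atTop := le_of_eq (by rw [hgdef])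
    refine tendsto_of_le_liminf_of_limsup_le hliminf ?_ hbdd hbdd'
    -- tail sums tend to zero
    have htail : ∀ N : ℕ, 1 ≤ N →
        Tendsto (fun r : ℕ => (∑ k ∈ Finset.Ico (r - N) r, W 1 (U^[k] ω)) / r)
          atTop (𝓝 0) := by
      intro N hN1
      have hterm : ∀ i : ℕ, i < N →
          Tendsto (fun r : ℕ => W 1 (U^[r - N + i] ω) / r) atTop (𝓝 0) := by
        intro i hi
        have hm : Tendsto (fun r : ℕ => r - N + i) atTop atTop :=
          tendsto_atTop_atTop.2 fun b => ⟨b + N, fun r hr => by omega⟩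
        have hcomp : Tendsto (fun r : ℕ => W 1 (U^[r - N + i] ω) / ((r - N + i : ℕ):ℝ))
            atTop (𝓝 0) := hbc.comp hm
        refine squeeze_zero'
          (Eventually.of_forall fun r => div_nonneg (hW1nn _) (Nat.cast_nonneg _)) ?_ hcomp
        filter_upwards [eventually_ge_atTop (N + 1)] with r hr
        have h1 : (0:ℝ) < ((r - N + i : ℕ):ℝ) := by exact_mod_cast (by omega : 0 < r - N + i)
        have h2 : ((r - N + i : ℕ):ℝ) ≤ (r:ℝ) := by exact_mod_cast (by omega : r - N + i ≤ r)
        exact div_le_div_of_nonneg_left (hW1nn _) h1 h2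
      have hsum : Tendsto
          (fun r : ℕ => ∑ i ∈ Finset.range N, W 1 (U^[r - N + i] ω) / r) atTop (𝓝 0) := by
        have h := tendsto_finset_sum (Finset.range N)
          (fun i hi => hterm i (Finset.mem_range.mp hi))
        simpa using h
      refine Tendsto.congr' ?_ hsum
      filter_upwards [eventually_ge_atTop N] with r hr
      rw [Finset.sum_Ico_eq_sum_range, (by omega : r - (r - N) = N), Finset.sum_div]
    -- the key limsup bound for each e, l
    have hH : ∀ e l : ℕ, limsup (fun n : ℕ => W n ω / n) atTop
        ≤ g ω + 1/((e:ℝ)+1) + 1/((l:ℝ)+1) := by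
      intro e l
      obtain ⟨N₀, hN₀⟩ := hgood e l
      set N : ℕ := max N₀ 1 with hNdef
      have hN1 : 1 ≤ N := le_max_right _ _
      have hεpos : (0:ℝ) < 1/((e:ℝ)+1) := by positivity
      have hmono : ∀ n, birk U (φ e N) n ω ≤ birk U (φ e N₀) n ω := by
        intro n
        refine Finset.sum_le_sum fun k _ => ?_
        rw [hφ]
        simp only
        refine Set.indicator_le_indicator_of_subset ?_ (fun x => hW1nn x) _
        exact Set.compl_subset_compl.2 (hAmono e N₀ N (le_max_left _ _))
      have hkey : ∀ r, 1 ≤ r → W r ω ≤ r * (g ω + 1/((e:ℝ)+1))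
          + birk U (φ e N) r ω + ∑ k ∈ Finset.Ico (r - N) r, W 1 (U^[k] ω) := by
        intro r hr
        have hc := covering hnonneg hsub g hεpos hN1 ω hok hg0 (A e N)
          (by rw [hA]) r 0 hr
        simp only [Function.iterate_zero_apply, zero_add] at hc
        have hmax : max 0 (r - N) = r - N := max_eq_right (Nat.zero_le _)
        rw [hmax] at hc
        have hbirk : (∑ k ∈ Finset.Ico 0 r, (A e N)ᶜ.indicator (W 1) (U^[k] ω))
            = birk U (φ e N) r ω := by
          rw [birk, Finset.range_eq_Ico]
        rw [hbirk] at hc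
        exact hc
      apply real_le_of_forall_pos_le_add
      intro δ hδ
      have hevtail : ∀ᶠ r : ℕ in atTop,
          (∑ k ∈ Finset.Ico (r - N) r, W 1 (U^[k] ω)) / r ≤ δ := by
        have := (htail N hN1).eventually (eventually_le_nhds hδ)
        exact this
      have hev : ∀ᶠ r : ℕ in atTop,
          W r ω / r ≤ g ω + 1/((e:ℝ)+1) + 1/((l:ℝ)+1) + δ := by
        filter_upwards [eventually_ge_atTop 1, hevtail] with r hr1 hrtail
        have hrpos : (0:ℝ) < r := by exact_mod_cast hr1
        have h1 := hkey r hr1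
        have h2 : birk U (φ e N) r ω ≤ (1/((l:ℝ)+1)) * r :=
          le_trans (hmono r) (hN₀ r hr1)
        have h3 : (∑ k ∈ Finset.Ico (r - N) r, W 1 (U^[k] ω)) ≤ δ * r := by
          rw [div_le_iff₀ hrpos] at hrtail
          exact hrtail
        rw [div_le_iff₀ hrpos]
        calc W r ω ≤ r * (g ω + 1/((e:ℝ)+1)) + birk U (φ e N) r ω
              + ∑ k ∈ Finset.Ico (r - N) r, W 1 (U^[k] ω) := h1
          _ ≤ r * (g ω + 1/((e:ℝ)+1)) + (1/((l:ℝ)+1)) * r + δ * r := by linarith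
          _ = (g ω + 1/((e:ℝ)+1) + 1/((l:ℝ)+1) + δ) * r := by ring
      exact limsup_le_of_le hbdd'.isCoboundedUnder_le hev
    apply real_le_of_forall_pos_le_add
    intro ζ hζ
    obtain ⟨e, he⟩ := exists_nat_gt (2/ζ)
    have h1 := hH e e
    have h2 : 1/((e:ℝ)+1) + 1/((e:ℝ)+1) ≤ ζ := by
      have hepos : (0:ℝ) < (e:ℝ) + 1 := by positivity
      have : 2/ζ < (e:ℝ) + 1 := lt_trans he (by linarith)
      rw [div_lt_iff₀ hζ] at this
      rw [← add_div, div_le_iff₀ hepos]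
      linarith
    linarith
  · -- ergodic case
    intro hErg
    have hcomp : g ∘ U =ᵐ[P] g := hinv
    obtain ⟨c, hc⟩ := hErg.ae_eq_const_of_ae_eq_comp₀ hgmeas.nullMeasurable hcomp
    exact ⟨c, hc⟩
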